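/- Let f_1 ≡ 1 on [0,1] be agent 1's true density and f_1' = ℓ⁽ⁿ⁾ (equal to 3/2 on [0,1/(2n)), 1/2 on [1/(2n),1/n), 1 on [1/n,1]). In the n-agent moving-knife procedure, for any densities f_2,...,f_n of the other agents, the interval agent 1 receives when reporting f_1' has Lebesgue measure (hence true value) at least 1/n; i.e., the misreport f_1' never drops agent 1 below the proportional share. -/

import Mathlib

open MeasureTheory Set intervalIntegral

/-- The density `ℓ⁽ⁿ⁾`: `3/2` on `[0, 1/(2n))`, `1/2` on `[1/(2n), 1/n)`, `1` on `[1/n, 1]`. -/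
noncomputable def ell (n : ℕ) : ℝ → ℝ := fun x =>
  if x < 1 / (2 * n) then 3/2 else if x < 1 / n then 1/2 else 1

lemma ell_measurable (n : ℕ) : Measurable (ell n) := by
  unfold ell
  exact Measurable.ite (measurableSet_lt measurable_id measurable_const)
    measurable_const (Measurable.ite (measurableSet_lt measurable_id measurable_const)
    measurable_const measurable_const)

lemma ell_abs_le (n : ℕ) (x : ℝ) : |ell n x| ≤ 3/2 := by
  unfold ell
  split_ifs <;> rw [abs_of_pos (by norm_num)] <;> norm_num

lemma ell_intervalIntegrable (n : ℕ) (a b : ℝ) :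
    IntervalIntegrable (ell n) volume a b := by
  rw [intervalIntegrable_iff]
  apply Integrable.mono' (g := fun _ => (3:ℝ)/2)
    (integrableOn_const measure_Ioc_lt_top.ne)
  · exact (ell_measurable n).aestronglyMeasurable.restrict
  · filter_upwards with x using ell_abs_le n x

lemma integral_const_on {f : ℝ → ℝ} {u v C : ℝ} (huv : u ≤ v)
    (h : ∀ x ∈ Ioo u v, f x = C) :
    ∫ t in u..v, f t = C * (v - u) := by
  rw [intervalIntegral.integral_of_le huv, MeasureTheory.integral_Ioc_eq_integral_Ioo,
    MeasureTheory.setIntegral_congr_fun measurableSet_Ioo h]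
  simp [Real.volume_Ioo, ENNReal.toReal_ofReal (sub_nonneg.2 huv), mul_comm, huv]

lemma ell_total (n : ℕ) (hn : 2 ≤ n) : ∫ t in (0:ℝ)..1, ell n t = 1 := by
  have hn0 : (0:ℝ) < n := Nat.cast_pos.2 (by omega)
  set d : ℝ := 1 / (2 * n) with hd
  have hdpos : 0 < d := by positivity
  have h2d : 1 / (n:ℝ) = 2 * d := by rw [hd]; field_simp
  have h2d1 : 2 * d ≤ 1 := by
    rw [← h2d]
    rw [div_le_one hn0]
    exact_mod_cast (by omega : 1 ≤ n)
  have e1 : ∫ t in (0:ℝ)..d, ell n t = (3/2) * (d - 0) := by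
    apply integral_const_on (le_of_lt hdpos)
    intro x hx
    unfold ell
    rw [if_pos hx.2]
  have e2 : ∫ t in d..(2*d), ell n t = (1/2) * (2*d - d) := by
    apply integral_const_on (by linarith)
    intro x hx
    unfold ell
    rw [if_neg (not_lt.2 hx.1.le), if_pos (by rw [h2d]; exact hx.2)]
  have e3 : ∫ t in (2*d)..1, ell n t = 1 * (1 - 2*d) := by
    apply integral_const_on (by linarith)
    intro x hx
    unfold ell
    rw [if_neg (by push_neg; linarith [hx.1]), if_neg (by push_neg; rw [h2d]; exact hx.1.le)]
  have h12 := intervalIntegral.integral_add_adjacent_intervals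
    (ell_intervalIntegrable n 0 d) (ell_intervalIntegrable n d (2*d))
  have h123 := intervalIntegral.integral_add_adjacent_intervals
    (ell_intervalIntegrable n 0 (2*d)) (ell_intervalIntegrable n (2*d) 1)
  rw [← h123, ← h12, e1, e2, e3]
  ring

lemma ell_key (n : ℕ) (hn : 2 ≤ n) (a b : ℝ) (ha : 0 ≤ a) (hab : a ≤ b)
    (h : 1 / (n:ℝ) ≤ ∫ t in a..b, ell n t) : 1 / (n:ℝ) ≤ b - a := by
  have hn0 : (0:ℝ) < n := Nat.cast_pos.2 (by omega)
  set d : ℝ := 1 / (2 * n) with hd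
  have hdpos : 0 < d := by positivity
  have h2d : 1 / (n:ℝ) = 2 * d := by rw [hd]; field_simp
  by_contra hcon
  push_neg at hcon
  rw [h2d] at h hcon
  rcases le_or_gt d a with hda | had
  · -- ell ≤ 1 on [a, b]
    have hb : ∫ t in a..b, ell n t ≤ ∫ t in a..b, (1:ℝ) := by
      apply intervalIntegral.integral_mono_on hab (ell_intervalIntegrable n a b)
        intervalIntegrable_const
      intro x hx
      unfold ell
      split_ifs with h1 h2 <;> [skip; norm_num; norm_num]
      · exact absurd h1 (not_lt.2 (le_trans hda hx.1))
    rw [intervalIntegral.integral_const, smul_eq_mul, mul_one] at hb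
    linarith
  · rcases le_or_gt b d with hbd | hdb
    · have e1 : ∫ t in a..b, ell n t = (3/2) * (b - a) :=
        integral_const_on hab (fun x hx => by
          unfold ell; rw [if_pos (lt_of_lt_of_le hx.2 hbd)])
      rw [e1] at h
      linarith
    · have e1 : ∫ t in a..d, ell n t = (3/2) * (d - a) :=
        integral_const_on had.le (fun x hx => by unfold ell; rw [if_pos hx.2])
      have hsplit := intervalIntegral.integral_add_adjacent_intervals
        (ell_intervalIntegrable n a d) (ell_intervalIntegrable n d b)
      rcases le_or_gt b (2*d) with hb2 | h2b
      · have e2 : ∫ t in d..b, ell n t = (1/2) * (b - d) :=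
          integral_const_on hdb.le (fun x hx => by
            unfold ell
            rw [if_neg (not_lt.2 hx.1.le), if_pos (by rw [h2d]; exact lt_of_lt_of_le hx.2 hb2)])
        rw [← hsplit, e1, e2] at h
        linarith
      · have e2 : ∫ t in d..(2*d), ell n t = (1/2) * (2*d - d) :=
          integral_const_on (by linarith) (fun x hx => by
            unfold ell
            rw [if_neg (not_lt.2 hx.1.le), if_pos (by rw [h2d]; exact hx.2)])
        have e3 : ∫ t in (2*d)..b, ell n t = 1 * (b - 2*d) :=
          integral_const_on h2b.le (fun x hx => by
            unfold ell
            rw [if_neg (by push_neg; linarith [hx.1]),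
              if_neg (by push_neg; rw [h2d]; exact hx.1.le)])
        have hsplit2 := intervalIntegral.integral_add_adjacent_intervals
          (ell_intervalIntegrable n d (2*d)) (ell_intervalIntegrable n (2*d) b)
        rw [← hsplit, ← hsplit2, e1, e2, e3] at h
        linarith

/-- If agent 1 (whose true density is uniform) reports `ℓ⁽ⁿ⁾` in the moving-knife
procedure, then for any reports of the other agents, the interval agent 1 receives has
length (hence true value) at least `1/n`: the misreport never drops agent 1 below the
proportional share. -/
theorem moving_knife_ell_misreport_safe
    (n : ℕ) (hn : 2 ≤ n)
    (f : Fin n → ℝ → ℝ)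
    (hf0 : f ⟨0, by omega⟩ = ell n)
    (hmeas : ∀ i, Measurable (f i))
    (hpos : ∀ i, ∀ t ∈ Set.Icc (0:ℝ) 1, 0 < f i t)
    (hint : ∀ i, IntegrableOn (f i) (Set.Icc 0 1))
    -- σ enumerates the agents in the order they are allocated, c are the cut points
    (σ : ℕ → Fin n) (hσ : ∀ i : Fin n, ∃! j, j < n ∧ σ j = i)
    (c : ℕ → ℝ) (hc0 : c 0 = 0) (hcIcc : ∀ j < n, c j ∈ Set.Icc (0:ℝ) 1)
    (hcmono : ∀ j < n - 1, c j ≤ c (j + 1))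
    (hexact : ∀ j < n - 1,
      (∫ t in c j..c (j + 1), f (σ j) t) = (1 / n) * ∫ t in (0:ℝ)..1, f (σ j) t)
    (hmin : ∀ j k, j ≤ k → k < n → j < n - 1 →
      (∫ t in c j..c (j + 1), f (σ k) t) ≤ (1 / n) * ∫ t in (0:ℝ)..1, f (σ k) t) :
    ∀ j < n, σ j = ⟨0, by omega⟩ →
      (if j < n - 1 then c (j + 1) - c j else 1 - c j) ≥ 1 / n := by
  intro j hj hσj
  have hfj : f (σ j) = ell n := by rw [hσj]; exact hf0
  by_cases hjn : j < n - 1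
  · rw [if_pos hjn]
    have h := hexact j hjn
    rw [hfj, ell_total n hn, mul_one] at h
    have ha : (0:ℝ) ≤ c j := (hcIcc j hj).1
    have hab : c j ≤ c (j + 1) := hcmono j hjn
    exact ell_key n hn (c j) (c (j+1)) ha hab h.ge
  · rw [if_neg hjn]
    have hjeq : j = n - 1 := by omega
    subst hjeq
    -- sum of the first n-1 pieces
    have hsum : (∑ i ∈ Finset.range (n-1), ∫ t in c i..c (i+1), ell n t)
        = ∫ t in (c 0)..(c (n-1)), ell n t :=
      intervalIntegral.sum_integral_adjacent_intervals
        (fun k _ => ell_intervalIntegrable n (c k) (c (k+1)))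
    have hbound : ∀ i ∈ Finset.range (n-1),
        (∫ t in c i..c (i+1), ell n t) ≤ 1 / (n:ℝ) := by
      intro i hi
      have hi' : i < n - 1 := Finset.mem_range.1 hi
      have h := hmin i (n-1) (by omega) (by omega) hi'
      rw [hfj, ell_total n hn, mul_one] at h
      exact h
    have hsumle : (∑ i ∈ Finset.range (n-1), ∫ t in c i..c (i+1), ell n t)
        ≤ (n - 1 : ℕ) * (1 / (n:ℝ)) := by
      calc (∑ i ∈ Finset.range (n-1), ∫ t in c i..c (i+1), ell n t)
          ≤ ∑ _i ∈ Finset.range (n-1), 1 / (n:ℝ) := Finset.sum_le_sum hbound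
        _ = (n - 1 : ℕ) * (1 / (n:ℝ)) := by
            rw [Finset.sum_const, Finset.card_range]; simp
    have hsplit := intervalIntegral.integral_add_adjacent_intervals
      (ell_intervalIntegrable n 0 (c (n-1))) (ell_intervalIntegrable n (c (n-1)) 1)
    rw [ell_total n hn] at hsplit
    have hn0 : (0:ℝ) < n := Nat.cast_pos.2 (by omega)
    have hcast : ((n - 1 : ℕ) : ℝ) = (n:ℝ) - 1 := by
      have : 1 ≤ n := by omega
      push_cast [this]; ring
    have hlast : 1 / (n:ℝ) ≤ ∫ t in c (n-1)..1, ell n t := by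
      have h0 : ∫ t in (0:ℝ)..c (n-1), ell n t ≤ ((n:ℝ) - 1) * (1 / (n:ℝ)) := by
        rw [← hc0, ← hsum]
        rw [hcast] at hsumle
        exact hsumle
      have : ((n:ℝ) - 1) * (1 / (n:ℝ)) = 1 - 1 / (n:ℝ) := by field_simp
      linarith
    have ha : (0:ℝ) ≤ c (n-1) := (hcIcc (n-1) hj).1
    have hab : c (n-1) ≤ 1 := (hcIcc (n-1) hj).2
    exact ell_key n hn (c (n-1)) 1 ha hab hlast
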